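/- The maximum of Σ_{i=1}^n (p_i − q_i)² over all pairs of permutations p, q of {1,...,n} equals n(n²−1)/3, and this maximum is achieved by taking q to be the reversal of p. -/

import Mathlib

open Finset

private lemma sum1 (n : ℕ) : ∑ i ∈ Finset.range n, (i : ℚ) = n * (n - 1) / 2 := by
  induction n with
  | zero => simp
  | succ k ih => rw [Finset.sum_range_succ, ih]; push_cast; ring

private lemma sum2 (n : ℕ) :
    ∑ i ∈ Finset.range n, (i : ℚ) ^ 2 = n * (n - 1) * (2 * n - 1) / 6 := by
  induction n with
  | zero => simp
  | succ k ih => rw [Finset.sum_range_succ, ih]; push_cast; ring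

private lemma cast_rev {n : ℕ} (i : Fin n) :
    ((Fin.rev i : ℕ) : ℚ) = (n : ℚ) - ((i : ℕ) : ℚ) - 1 := by
  rw [Fin.val_rev, Nat.cast_sub i.isLt]
  push_cast; ring

private lemma key (n : ℕ) :
    ∑ i : Fin n, (((i : ℕ) : ℚ) - ((Fin.rev i : ℕ) : ℚ)) ^ 2
      = (n : ℚ) * ((n : ℚ) ^ 2 - 1) / 3 := by
  have h : ∀ i : Fin n, (((i : ℕ) : ℚ) - ((Fin.rev i : ℕ) : ℚ)) ^ 2
      = 4 * ((i : ℕ) : ℚ) ^ 2 - (4 * (n : ℚ) - 4) * ((i : ℕ) : ℚ) + ((n : ℚ) - 1) ^ 2 := by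
    intro i; rw [cast_rev]; ring
  rw [Fintype.sum_congr _ _ h]
  rw [Fin.sum_univ_eq_sum_range
    (fun x => 4 * ((x : ℕ) : ℚ) ^ 2 - (4 * (n : ℚ) - 4) * ((x : ℕ) : ℚ) + ((n : ℚ) - 1) ^ 2)]
  simp only [Finset.sum_add_distrib, Finset.sum_sub_distrib, ← Finset.mul_sum,
    Finset.sum_const, Finset.card_range, nsmul_eq_mul]
  rw [sum1, sum2]
  ring

/-- The maximum of Σᵢ (pᵢ − qᵢ)² over pairs of permutations of {1,…,n} is n(n²−1)/3,
achieved when q is the reversal of p. -/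
theorem stmt6 (n : ℕ) :
    IsGreatest {s : ℚ | ∃ p q : Equiv.Perm (Fin n),
        s = ∑ i, (((p i : ℕ) : ℚ) - ((q i : ℕ) : ℚ)) ^ 2}
      ((n : ℚ) * ((n : ℚ) ^ 2 - 1) / 3)
    ∧ ∀ p : Equiv.Perm (Fin n),
        ∑ i, (((p i : ℕ) : ℚ) - (((p.trans Fin.revPerm) i : ℕ) : ℚ)) ^ 2
          = (n : ℚ) * ((n : ℚ) ^ 2 - 1) / 3 := by
  set f : Fin n → ℚ := fun i => ((i : ℕ) : ℚ) with hf
  have hrevsum : ∀ p : Equiv.Perm (Fin n),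
      ∑ i, (f (p i) - f (Fin.rev (p i))) ^ 2 = (n : ℚ) * ((n : ℚ) ^ 2 - 1) / 3 := by
    intro p
    rw [Equiv.sum_comp p (fun j => (f j - f (Fin.rev j)) ^ 2)]
    exact key n
  constructor
  · constructor
    · exact ⟨1, Fin.revPerm, by
        simp only [Equiv.Perm.coe_one, id_eq, Fin.revPerm_apply]
        exact (key n).symm⟩
    · rintro s ⟨p, q, rfl⟩
      -- reindex: let σ = p.symm.trans q, then q i = σ (p i)
      set σ : Equiv.Perm (Fin n) := p.symm.trans q with hσ
      have hq : ∀ i, q i = σ (p i) := by intro i; simp [hσ]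
      have h1 : ∑ i, (f (p i) - f (q i)) ^ 2 = ∑ j, (f j - f (σ j)) ^ 2 := by
        rw [show (fun i => (f (p i) - f (q i)) ^ 2) = (fun i => (f (p i) - f (σ (p i))) ^ 2)
          from funext fun i => by rw [hq]]
        exact Equiv.sum_comp p (fun j => (f j - f (σ j)) ^ 2)
      rw [h1]
      have hsq : ∑ j, f (σ j) ^ 2 = ∑ j, f j ^ 2 := Equiv.sum_comp σ (fun j => f j ^ 2)
      have hrevsq : ∑ j, f (Fin.rev j) ^ 2 = ∑ j, f j ^ 2 :=
        Equiv.sum_comp Fin.revPerm (fun j => f j ^ 2)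
      -- rearrangement
      have hanti : Antivary f (fun j => f (Fin.rev j)) := by
        intro i j hlt
        simp only [hf] at hlt ⊢
        have h1 : Fin.rev i < Fin.rev j := by
          rw [Fin.lt_def]; exact_mod_cast hlt
        have hji : j < i := Fin.rev_lt_rev.mp h1
        exact_mod_cast (Fin.le_def.mp hji.le)
      have hre : ∑ j, f j * f (Fin.rev j) ≤ ∑ j, f j * f (σ j) := by
        set τ : Equiv.Perm (Fin n) := σ.trans Fin.revPerm with hτ
        have h2 : ∀ j, f (Fin.rev (τ j)) = f (σ j) := by
          intro j; simp [hτ]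
        calc ∑ j, f j * f (Fin.rev j) = ∑ j, f j • (fun k => f (Fin.rev k)) j := by
              simp [smul_eq_mul]
          _ ≤ ∑ j, f j • (fun k => f (Fin.rev k)) (τ j) :=
              hanti.sum_smul_le_sum_smul_comp_perm
          _ = ∑ j, f j * f (σ j) := by simp [smul_eq_mul, h2]
      have expand : ∀ (g : Fin n → ℚ), ∑ j, (f j - g j) ^ 2
          = ∑ j, f j ^ 2 + ∑ j, g j ^ 2 - 2 * ∑ j, f j * g j := by
        intro g
        rw [Finset.mul_sum, ← Finset.sum_add_distrib, ← Finset.sum_sub_distrib]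
        exact Finset.sum_congr rfl fun j _ => by ring
      have e1 := expand (fun j => f (σ j))
      have e2 := expand (fun j => f (Fin.rev j))
      rw [← hrevsum 1]
      simp only [Equiv.Perm.coe_one, id_eq] at *
      rw [e1, e2, hsq, hrevsq]
      linarith
  · intro p
    have := hrevsum p
    exact this
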